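/- Let N ≥ 2 be a natural number and set θ_N = 2π/N. For all integers a, b, setting u = exp(ι·2πa/N) and v = exp(ι·2πb/N) (so that u, v ∈ S_N), one has |u − v|² ≥ (4·sin²(θ_N/2)/θ_N)·d_{S¹}(u,v). -/

import Mathlib

/-- The geodesic distance on the unit circle `S¹ ⊂ ℂ`:
`d_{S¹}(u,v) = arccos(Re(conj(u)·v))`, the angle in `[0,π]` between `u` and `v`. -/
noncomputable def dS1 (u v : ℂ) : ℝ :=
  Real.arccos (((starRingEnd ℂ) u * v).re)

open Real in
lemma sin_ge_aux {s t : ℝ} (hs0 : 0 ≤ s) (hst : s ≤ t) (ht : t ≤ π - s) :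
    Real.sin s ≤ Real.sin t := by
  rcases le_or_gt t (π / 2) with h | h
  · exact Real.sin_le_sin_of_le_of_le_pi_div_two (by linarith [Real.pi_pos]) h hst
  · rw [← Real.sin_pi_sub t]
    exact Real.sin_le_sin_of_le_of_le_pi_div_two (by linarith [Real.pi_pos])
      (by linarith) (by linarith)

open Real in
lemma one_sub_cos_ge_aux (θ : ℝ) (hθ : 0 < θ) :
    ∀ k : ℕ, (k : ℝ) * θ ≤ π → (k : ℝ) * (1 - Real.cos θ) ≤ 1 - Real.cos ((k : ℝ) * θ) := by
  intro k
  induction k with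
  | zero => simp
  | succ k ih =>
    intro hk
    push_cast at ih hk ⊢
    have hkθ : (k : ℝ) * θ ≤ π := by nlinarith [hθ.le]
    have h1 := ih hkθ
    -- cos (kθ) - cos ((k+1)θ) ≥ 1 - cos θ
    have hcc : Real.cos ((k : ℝ) * θ) - Real.cos (((k : ℝ) + 1) * θ)
        = 2 * Real.sin (((k : ℝ) + 1 / 2) * θ) * Real.sin (θ / 2) := by
      rw [Real.cos_sub_cos]
      have e1 : ((k : ℝ) * θ + ((k : ℝ) + 1) * θ) / 2 = ((k : ℝ) + 1 / 2) * θ := by ring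
      have e2 : ((k : ℝ) * θ - ((k : ℝ) + 1) * θ) / 2 = -(θ / 2) := by ring
      rw [e1, e2, Real.sin_neg]
      ring
    have hsin : Real.sin (θ / 2) ≤ Real.sin (((k : ℝ) + 1 / 2) * θ) := by
      apply sin_ge_aux (by linarith) (by nlinarith) (by nlinarith)
    have hs0 : 0 ≤ Real.sin (θ / 2) := by
      apply Real.sin_nonneg_of_nonneg_of_le_pi (by linarith) (by nlinarith)
    have h2sq : 2 * Real.sin (θ / 2) ^ 2 = 1 - Real.cos θ := by
      have := Real.cos_two_mul (θ / 2)
      have h := Real.sin_sq_add_cos_sq (θ / 2)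
      have e : 2 * (θ / 2) = θ := by ring
      rw [e] at this
      nlinarith
    nlinarith [mul_le_mul_of_nonneg_left hsin (le_of_lt (by positivity : (0:ℝ) < 2)),
      mul_le_mul_of_nonneg_right hsin hs0]

/-- Core estimate of Proposition 3.3: for `u, v ∈ S_N`,
`|u − v|² ≥ (4·sin²(θ_N/2)/θ_N)·d_{S¹}(u,v)` where `θ_N = 2π/N`. -/
theorem sq_abs_sub_ge_geodesic (N : ℕ) (hN : 2 ≤ N) (θ : ℝ) (hθ : θ = 2 * Real.pi / N)
    (a b : ℤ) (u v : ℂ)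
    (hu : u = Complex.exp (Complex.I * (2 * Real.pi * a / N)))
    (hv : v = Complex.exp (Complex.I * (2 * Real.pi * b / N))) :
    ‖u - v‖ ^ 2 ≥ (4 * Real.sin (θ / 2) ^ 2 / θ) * dS1 u v := by
  have hNpos : (0 : ℝ) < N := by positivity
  have hpi := Real.pi_pos
  have hθpos : 0 < θ := by rw [hθ]; positivity
  have hNθ : (N : ℝ) * θ = 2 * Real.pi := by
    rw [hθ]; field_simp
  -- compute conj u * v
  set m : ℤ := b - a with hm
  have hre : ((starRingEnd ℂ) u * v).re = Real.cos (θ * m) := by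
    subst hu hv
    rw [← Complex.exp_conj, ← Complex.exp_add]
    have : (starRingEnd ℂ) (Complex.I * (2 * Real.pi * a / N)) +
        Complex.I * (2 * Real.pi * b / N) = ((θ * m : ℝ) : ℂ) * Complex.I := by
      simp only [map_mul, map_div₀, Complex.conj_I, map_ofNat, Complex.conj_ofReal,
        map_intCast, map_natCast, hθ, hm]
      push_cast
      have : (N : ℂ) ≠ 0 := by exact_mod_cast (by positivity : (0:ℝ) < N).ne'
      field_simp
      ring
    rw [this, Complex.exp_ofReal_mul_I_re]
  -- |u - v|^2 = 2 - 2 cos (θ m)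
  have habs : ‖u - v‖ ^ 2 = 2 - 2 * Real.cos (θ * m) := by
    rw [Complex.sq_norm, Complex.normSq_sub]
    have hnu : Complex.normSq u = 1 := by
      rw [hu, Complex.normSq_eq_norm_sq]
      have : (Complex.I * (2 * Real.pi * a / N)) = ((2 * Real.pi * a / N : ℝ) : ℂ) * Complex.I := by
        push_cast; ring
      rw [this, Complex.norm_exp_ofReal_mul_I]; norm_num
    have hnv : Complex.normSq v = 1 := by
      rw [hv, Complex.normSq_eq_norm_sq]
      have : (Complex.I * (2 * Real.pi * b / N)) = ((2 * Real.pi * b / N : ℝ) : ℂ) * Complex.I := by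
        push_cast; ring
      rw [this, Complex.norm_exp_ofReal_mul_I]; norm_num
    have hre' : (u * (starRingEnd ℂ) v).re = Real.cos (θ * m) := by
      rw [← hre]
      have : u * (starRingEnd ℂ) v = (starRingEnd ℂ) ((starRingEnd ℂ) u * v) := by
        simp [mul_comm]
      rw [this, Complex.conj_re]
    rw [hnu, hnv, hre']
    ring
  -- find k : ℕ with cos (θ m) = cos (k θ) and k θ ∈ [0, π]
  obtain ⟨k, hkπ, hkcos⟩ : ∃ k : ℕ, (k : ℝ) * θ ≤ Real.pi ∧
      Real.cos (θ * m) = Real.cos ((k : ℝ) * θ) := by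
    have hNne : (N : ℤ) ≠ 0 := by positivity
    set r : ℤ := m % N with hr
    have hr0 : 0 ≤ r := Int.emod_nonneg m hNne
    have hrN : r < N := Int.emod_lt_of_pos m (by positivity)
    have hcosr : Real.cos (θ * m) = Real.cos (θ * r) := by
      have : θ * m = θ * r + (m / N : ℤ) * (2 * Real.pi) := by
        rw [← hNθ]
        have h := Int.emod_add_mul_ediv m (N : ℤ)
        have h2 : ((r + (N : ℤ) * (m / (N : ℤ)) : ℤ) : ℝ) = (m : ℝ) := by exact_mod_cast congrArg Int.cast h
        push_cast at h2
        nlinarith [h2]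
      rw [this, Real.cos_add_int_mul_two_pi]
    have hrr : ((r.toNat : ℕ) : ℝ) = (r : ℝ) := by exact_mod_cast Int.toNat_of_nonneg hr0
    rcases le_or_gt ((r : ℝ) * θ) Real.pi with h | h
    · refine ⟨r.toNat, ?_, ?_⟩
      · rwa [hrr]
      · rw [hcosr, hrr, mul_comm]
    · refine ⟨N - r.toNat, ?_, ?_⟩
      · have hcast : ((N - r.toNat : ℕ) : ℝ) = (N : ℝ) - (r : ℝ) := by
          have hle : r.toNat ≤ N := by omega
          push_cast [Nat.cast_sub hle]
          rw [hrr]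
        rw [hcast]
        nlinarith
      · have hcast : ((N - r.toNat : ℕ) : ℝ) = (N : ℝ) - (r : ℝ) := by
          have hle : r.toNat ≤ N := by omega
          push_cast [Nat.cast_sub hle]
          rw [hrr]
        rw [hcosr, hcast]
        have : ((N : ℝ) - r) * θ = -(r * θ) + (2 * Real.pi) := by
          rw [← hNθ]; ring
        rw [this]
        have := Real.cos_add_int_mul_two_pi (-(r * θ)) 1
        push_cast at this
        rw [mul_comm θ (r:ℝ)]
        rw [show -((r:ℝ) * θ) + 2 * Real.pi = -((r:ℝ)*θ) + 1 * (2 * Real.pi) by ring, this,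
          Real.cos_neg]
    
  have hd : dS1 u v = (k : ℝ) * θ := by
    unfold dS1
    rw [hre, hkcos, Real.arccos_cos (by positivity) hkπ]
  have hkey := one_sub_cos_ge_aux θ hθpos k hkπ
  have h2sq : 2 * Real.sin (θ / 2) ^ 2 = 1 - Real.cos θ := by
    have := Real.cos_two_mul (θ / 2)
    have h := Real.sin_sq_add_cos_sq (θ / 2)
    have e : 2 * (θ / 2) = θ := by rw [mul_div_cancel₀]; norm_num
    rw [e] at this
    nlinarith
  rw [habs, hd, hkcos, div_mul_eq_mul_div, ge_iff_le, div_le_iff₀ hθpos]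
  nlinarith
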